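/- For a regularized binary asymmetric channel BAC(p₀, p₁) with 0 < p₀ < 1/2 and p₀ ≤ p₁ ≤ 1-p₀, the capacity-achieving input probability of symbol 0, given by π₀* = (1 - p₁(1+z)) / ((1-p₀-p₁)(1+z)) with z = 2^{(h(p₀)-h(p₁))/(1-p₀-p₁)} (when p₀+p₁ ≠ 1), satisfies 1/2 ≤ π₀* < 1. -/

import Mathlib

open Real

/-- Strict tangent-line inequality for binary entropy. -/
lemma binEntropy_tangent_lt (u w : ℝ) (hu0 : 0 < u) (huw : u < w) (hw1 : w < 1) :
    binEntropy w < binEntropy u + (w - u) * (Real.log (1 - u) - Real.log u) := by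
  set K := Real.log (1 - u) - Real.log u with hK
  set g : ℝ → ℝ := fun x => binEntropy u + (x - u) * K - binEntropy x with hg
  have hderiv : ∀ x ∈ Set.Ioo u w, HasDerivAt g (K - (Real.log (1 - x) - Real.log x)) x := by
    intro x hx
    have hx0 : x ≠ 0 := by nlinarith [hx.1]
    have hx1 : x ≠ 1 := by nlinarith [hx.2]
    have h1 : HasDerivAt (fun x : ℝ => binEntropy u + (x - u) * K) K x := by
      simpa using (((hasDerivAt_id x).sub_const u).mul_const K).const_add (binEntropy u)
    exact h1.sub (Real.hasDerivAt_binEntropy hx0 hx1)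
  have hmono : StrictMonoOn g (Set.Icc u w) := by
    apply strictMonoOn_of_deriv_pos (convex_Icc u w)
    · apply Continuous.continuousOn
      fun_prop
    · intro x hx
      rw [interior_Icc] at hx
      rw [(hderiv x hx).deriv]
      have h1 : Real.log (1 - x) < Real.log (1 - u) := by
        apply Real.log_lt_log (by linarith [hx.2]) (by linarith [hx.1])
      have h2 : Real.log u < Real.log x := Real.log_lt_log hu0 hx.1
      simp only [hK]
      linarith
  have := hmono (Set.left_mem_Icc.2 huw.le) (Set.right_mem_Icc.2 huw.le) huw
  simp only [hg] at this
  simp at this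
  linarith

/-- Midpoint secant inequality for binary entropy when the midpoint is ≤ 1/2. -/
lemma binEntropy_midpoint (m T : ℝ) (hT0 : 0 ≤ T) (hTm : T < m) (hm : m ≤ 1/2) :
    binEntropy (m - T) - binEntropy (m + T) ≤ 2 * T * (Real.log m - Real.log (1 - m)) := by
  have hm0 : 0 < m := lt_of_le_of_lt hT0 hTm
  have hm1 : m < 1 := by linarith
  set φ : ℝ → ℝ := fun t =>
    binEntropy (m + t) - binEntropy (m - t) - 2 * t * (Real.log (1 - m) - Real.log m) with hφ
  have hderiv : ∀ t ∈ Set.Ioo 0 T, HasDerivAt φ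
      ((Real.log (1 - (m + t)) - Real.log (m + t))
        + (Real.log (1 - (m - t)) - Real.log (m - t))
        - 2 * (Real.log (1 - m) - Real.log m)) t := by
    intro t ht
    have ht0 : 0 < t := ht.1
    have htT : t < T := ht.2
    have hmt0 : m + t ≠ 0 := by positivity
    have hmt1 : m + t ≠ 1 := by nlinarith
    have hmt0' : m - t ≠ 0 := by nlinarith
    have hmt1' : m - t ≠ 1 := by nlinarith
    have h1 : HasDerivAt (fun t : ℝ => binEntropy (m + t))
        (Real.log (1 - (m + t)) - Real.log (m + t)) t := by
      simpa [Function.comp_def] using (Real.hasDerivAt_binEntropy hmt0 hmt1).comp t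
        (((hasDerivAt_id t).const_add m))
    have h2 : HasDerivAt (fun t : ℝ => binEntropy (m - t))
        (-(Real.log (1 - (m - t)) - Real.log (m - t))) t := by
      have := (Real.hasDerivAt_binEntropy hmt0' hmt1').comp t
        (((hasDerivAt_id t).neg.const_add m))
      simpa [mul_comm, Function.comp_def] using this
    have h3 : HasDerivAt (fun t : ℝ => 2 * t * (Real.log (1 - m) - Real.log m))
        (2 * (Real.log (1 - m) - Real.log m)) t := by
      simpa [mul_assoc, mul_comm] using
        ((hasDerivAt_id t).const_mul 2).mul_const (Real.log (1 - m) - Real.log m)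
    rw [hφ]
    exact HasDerivAt.congr_deriv ((h1.sub h2).sub h3) (by ring)
  have hmono : MonotoneOn φ (Set.Icc 0 T) := by
    apply monotoneOn_of_deriv_nonneg (convex_Icc 0 T)
    · apply Continuous.continuousOn; fun_prop
    · rw [interior_Icc]
      exact fun x hx => (hderiv x hx).differentiableAt.differentiableWithinAt
    · rw [interior_Icc]
      intro t ht
      rw [(hderiv t ht).deriv]
      have ht0 : 0 < t := ht.1
      have htT : t < T := ht.2
      have p1 : (0:ℝ) < 1 - (m + t) := by nlinarith
      have p2 : (0:ℝ) < m + t := by positivity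
      have p3 : (0:ℝ) < 1 - (m - t) := by nlinarith
      have p4 : (0:ℝ) < m - t := by nlinarith
      have key : Real.log ((m + t) * (m - t) * ((1-m) * (1-m)))
          ≤ Real.log ((1 - (m + t)) * (1 - (m - t)) * (m * m)) := by
        apply Real.log_le_log (by nlinarith [mul_pos (mul_pos p2 p4) (mul_pos (show (0:ℝ)<1-m by linarith) (show (0:ℝ)<1-m by linarith))])
        nlinarith [mul_nonneg (mul_nonneg ht0.le ht0.le) (by linarith : (0:ℝ) ≤ 1 - 2*m)]
      rw [Real.log_mul (mul_pos p2 p4).ne' (mul_pos (by linarith : (0:ℝ) < 1-m) (by linarith : (0:ℝ) < 1-m)).ne',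
        Real.log_mul p2.ne' p4.ne',
        Real.log_mul (mul_pos p1 p3).ne' (mul_pos hm0 hm0).ne',
        Real.log_mul p1.ne' p3.ne',
        Real.log_mul (by linarith : (1-m) ≠ 0) (by linarith : (1-m) ≠ 0),
        Real.log_mul hm0.ne' hm0.ne'] at key
      linarith
  have h0T : (0:ℝ) ∈ Set.Icc 0 T := Set.left_mem_Icc.2 hT0
  have hTT : T ∈ Set.Icc (0:ℝ) T := Set.right_mem_Icc.2 hT0
  have := hmono h0T hTT hT0
  simp only [hφ] at this
  simp at this
  linarith

/-- For a regularized BAC(p₀,p₁), the capacity-achieving input probability of symbol 0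
satisfies 1/2 ≤ π₀* < 1. -/
theorem bac_capacity_achieving_pi0_bounds
    (p₀ p₁ : ℝ) (h0 : 0 < p₀) (h0' : p₀ < 1/2)
    (h1 : p₀ ≤ p₁) (h1' : p₁ ≤ 1 - p₀) (hne : p₀ + p₁ ≠ 1) :
    let h : ℝ → ℝ := fun t => -t * Real.logb 2 t - (1 - t) * Real.logb 2 (1 - t)
    let z : ℝ := 2 ^ ((h p₀ - h p₁) / (1 - p₀ - p₁))
    let π₀ : ℝ := (1 - p₁ * (1 + z)) / ((1 - p₀ - p₁) * (1 + z))
    1/2 ≤ π₀ ∧ π₀ < 1 := by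
  intro h z π₀
  have hp1lt : p₁ < 1 - p₀ := lt_of_le_of_ne h1' (fun he => hne (by linarith))
  have hs : 0 < 1 - p₀ - p₁ := by linarith
  have hp10 : 0 < p₁ := lt_of_lt_of_le h0 h1
  have hhB : ∀ t : ℝ, h t = binEntropy t / Real.log 2 := by
    intro t
    simp only [h, Real.logb, Real.binEntropy, Real.log_inv]
    ring
  have hzexp : z = Real.exp ((binEntropy p₀ - binEntropy p₁) / (1 - p₀ - p₁)) := by
    show (2:ℝ) ^ ((h p₀ - h p₁) / (1 - p₀ - p₁)) = _
    rw [hhB, hhB, Real.rpow_def_of_pos (by norm_num : (0:ℝ) < 2)]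
    congr 1
    have hl2 : Real.log 2 ≠ 0 := by
      have := Real.log_pos (by norm_num : (1:ℝ) < 2)
      linarith
    field_simp
  have hz0 : 0 < z := by rw [hzexp]; exact Real.exp_pos _
  have hden : 0 < (1 - p₀ - p₁) * (1 + z) := by positivity
  -- the two key entropy inequalities
  set m : ℝ := (1 + p₀ - p₁) / 2 with hm
  have hkey1 : binEntropy p₀ - binEntropy p₁ ≤ (1 - p₀ - p₁) * (Real.log m - Real.log (1 - m)) := by
    have := binEntropy_midpoint m ((1 - p₀ - p₁)/2) (by positivity)
      (by rw [hm]; linarith) (by rw [hm]; linarith)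
    have e1 : m - (1 - p₀ - p₁)/2 = p₀ := by rw [hm]; ring
    have e2 : m + (1 - p₀ - p₁)/2 = 1 - p₁ := by rw [hm]; ring
    rw [e1, e2, Real.binEntropy_one_sub] at this
    linarith
  have hkey2 : (1 - p₀ - p₁) * (Real.log p₀ - Real.log (1 - p₀))
      < binEntropy p₀ - binEntropy p₁ := by
    have := binEntropy_tangent_lt p₀ (1 - p₁) h0 (by linarith) (by linarith)
    rw [Real.binEntropy_one_sub] at this
    nlinarith [this]
  -- translate to bounds on z
  have hm0 : 0 < m := by rw [hm]; linarith
  have hm1 : 0 < 1 - m := by rw [hm]; linarith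
  have hzle : z * (1 - m) ≤ m := by
    have h1' : (binEntropy p₀ - binEntropy p₁) / (1 - p₀ - p₁) ≤ Real.log (m / (1 - m)) := by
      rw [Real.log_div hm0.ne' hm1.ne', div_le_iff₀ hs]
      linarith
    have := Real.exp_le_exp.mpr h1'
    rw [Real.exp_log (by positivity)] at this
    rw [← hzexp] at this
    rw [← le_div_iff₀ hm1] at *
    exact this
  have hzgt : p₀ < z * (1 - p₀) := by
    have h2' : Real.log (p₀ / (1 - p₀)) < (binEntropy p₀ - binEntropy p₁) / (1 - p₀ - p₁) := by
      rw [Real.log_div h0.ne' (by linarith : (1:ℝ) - p₀ ≠ 0), lt_div_iff₀ hs]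
      linarith
    have := Real.exp_lt_exp.mpr h2'
    rw [Real.exp_log (div_pos h0 (by linarith : (0:ℝ) < 1 - p₀)), ← hzexp,
      div_lt_iff₀ (by linarith : (0:ℝ) < 1 - p₀)] at this
    linarith
  constructor
  · rw [le_div_iff₀ hden]
    have hmdef : (2:ℝ) * m = 1 + p₀ - p₁ := by rw [hm]; ring
    nlinarith [hzle]
  · rw [div_lt_one hden]
    nlinarith [hzgt]
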